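/- If 0 < u* < 1, E ≠ 0 and V_d ≠ 0, then the pair (C, A(0)) for the Ćuk converter is observable: the 4×4 Kalman observability matrix [C; CA(0); CA(0)²; CA(0)³] is invertible, where A(0) = (J(u*) - R₀)P with the matrices as in the Ćuk model. -/

import Mathlib

open Matrix

set_option maxHeartbeats 1000000

/-- for the Ćuk converter, if 0 < u* < 1 (with
u* = V_d/(V_d+E), E ≠ 0, V_d ≠ 0), then the pair (C, A(0)) is observable: the
4×4 Kalman observability matrix [C; CA(0); CA(0)²; CA(0)³] is invertible. -/
theorem stmt19 (L₁ C₂ L₃ C₄ R E Vd : ℝ)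
    (hL₁ : 0 < L₁) (hC₂ : 0 < C₂) (hL₃ : 0 < L₃) (hC₄ : 0 < C₄) (hR : 0 < R)
    (hE : E ≠ 0) (hVd : Vd ≠ 0)
    (ustar : ℝ) (hustar : ustar = Vd / (Vd + E))
    (h0 : 0 < ustar) (h1 : ustar < 1) :
    let P : Matrix (Fin 4) (Fin 4) ℝ :=
      Matrix.diagonal ![1 / L₁, 1 / C₂, 1 / L₃, 1 / C₄]
    let J : Matrix (Fin 4) (Fin 4) ℝ :=
      !![0, -(1 - ustar), 0, 0;
         1 - ustar, 0, ustar, 0;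
         0, -ustar, 0, -1;
         0, 0, 1, 0]
    let R₀ : Matrix (Fin 4) (Fin 4) ℝ := Matrix.diagonal ![0, 0, 0, 1 / R]
    let A0 : Matrix (Fin 4) (Fin 4) ℝ := (J - R₀) * P
    let Crow : Matrix (Fin 1) (Fin 4) ℝ := !![0, 1, 0, 0]
    let O : Matrix (Fin 4) (Fin 4) ℝ :=
      Matrix.of fun i j => (Crow * A0 ^ (i : ℕ)) 0 j
    IsUnit O := by
  intro P J R₀ A0 Crow O
  rw [Matrix.isUnit_iff_isUnit_det]
  set u := ustar with hu
  have hA0 : A0 = !![0, -(1-u) * (1/C₂), 0, 0;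
      (1-u) * (1/L₁), 0, u * (1/L₃), 0;
      0, -u * (1/C₂), 0, -(1/C₄);
      0, 0, 1/L₃, -(1/R) * (1/C₄)] := by
    have hJR : J - R₀ = !![0, -(1-u), 0, 0; 1-u, 0, u, 0; 0, -u, 0, -1; 0, 0, 1, -(1/R)] := by
      ext i j
      fin_cases i <;> fin_cases j <;>
        simp [J, R₀, Matrix.diagonal, Matrix.vecHead, Matrix.vecTail] <;> exact hu.symm
    show (J - R₀) * P = _
    rw [hJR]
    ext i j
    fin_cases i <;> fin_cases j <;>
      simp [P, Matrix.mul_apply, Fin.sum_univ_four, Matrix.diagonal,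
        Matrix.vecHead, Matrix.vecTail] <;> ring
  have h1 : Crow * A0 = !![(1-u) * (1/L₁), 0, u * (1/L₃), 0] := by
    rw [hA0]
    ext i j
    fin_cases i <;> fin_cases j <;>
      simp [Crow, Matrix.mul_apply, Fin.sum_univ_four, Matrix.vecHead, Matrix.vecTail]
  set s : ℝ := -((1-u)*(1/L₁) * ((1-u)*(1/C₂))) - u*(1/L₃) * (u*(1/C₂)) with hs
  have h2 : Crow * A0 ^ 2 = !![0, s, 0, -(u*(1/L₃)*(1/C₄))] := by
    have e : Crow * A0 ^ 2 = (Crow * A0) * A0 := by rw [sq, ← Matrix.mul_assoc]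
    rw [e, h1, hA0]
    ext i j
    fin_cases i <;> fin_cases j <;>
      simp [Matrix.mul_apply, Fin.sum_univ_four, hs, Matrix.vecHead, Matrix.vecTail] <;> ring
  have h3 : Crow * A0 ^ 3 = !![(1-u)*(1/L₁)*s, 0,
      u*(1/L₃)*s - u*(1/L₃)*(1/C₄)*(1/L₃), u*(1/L₃)*(1/C₄)*(1/R)*(1/C₄)] := by
    have e : Crow * A0 ^ 3 = (Crow * A0 ^ 2) * A0 := by
      rw [pow_succ, ← Matrix.mul_assoc]
    rw [e, h2, hA0]
    ext i j
    fin_cases i <;> fin_cases j <;>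
      simp [Matrix.mul_apply, Fin.sum_univ_four, Matrix.vecHead, Matrix.vecTail] <;> ring
  have hO : O = !![0, 1, 0, 0;
      (1-u) * (1/L₁), 0, u * (1/L₃), 0;
      0, s, 0, -(u*(1/L₃)*(1/C₄));
      (1-u)*(1/L₁)*s, 0, u*(1/L₃)*s - u*(1/L₃)*(1/C₄)*(1/L₃), u*(1/L₃)*(1/C₄)*(1/R)*(1/C₄)] := by
    ext i j
    fin_cases i
    · show (Crow * A0 ^ (0:ℕ)) 0 j = _
      rw [pow_zero, Matrix.mul_one]
      fin_cases j <;> simp [Crow, Matrix.vecHead, Matrix.vecTail]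
    · show (Crow * A0 ^ (1:ℕ)) 0 j = _
      rw [pow_one, h1]
      fin_cases j <;> simp [Matrix.vecHead, Matrix.vecTail]
    · show (Crow * A0 ^ (2:ℕ)) 0 j = _
      rw [h2]
      fin_cases j <;> simp [Matrix.vecHead, Matrix.vecTail]
    · show (Crow * A0 ^ (3:ℕ)) 0 j = _
      rw [h3]
      fin_cases j <;> simp [Matrix.vecHead, Matrix.vecTail]
  have hdet : O.det = u^2 * (1-u) * (1/L₁) * (1/L₃)^3 * (1/C₄)^2 := by
    rw [hO]
    simp [Matrix.det_succ_row_zero, Fin.sum_univ_succ, Matrix.vecHead, Matrix.vecTail,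
      Fin.succAbove]
    ring
  rw [isUnit_iff_ne_zero, hdet]
  have hv0 : 0 < 1 - u := by linarith
  have hu0 : 0 < u := h0
  positivity
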